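/- arXiv:2604.25174 — 3 statements merged into one kernel-verified Lean document; each statement's English description precedes it below -/
import Mathlib

section
/- Let X = {x_1,...,x_r} and Y = {y_1,...,y_r} and define Q_{r,0} := e_r(Y - x_r) (i.e., the alternating sum Σ_j (-1)^j e_{r-j}(Y) x_r^j) in R = ℤ[X] ⊗ Sym(Y), and Q_{r,j} := ∂_{r-j}(Q_{r,j-1}) for j > 0, where ∂ acts on the X variables. Then Q_{r,j} = e_{r-j}(Y - {x_{r-j},...,x_r}) = Σ_{i=0}^{r-j} (-1)^i e_{r-j-i}(Y) h_i(x_{r-j},...,x_r). -/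
open MvPolynomial

/-- The Demazure (divided difference) operator on `ℤ`-polynomials associated to the pair of
variables `i`, `j`: the unique `g` with `(X i - X j) * g = f - s f`, where `s` swaps `i` and `j`. -/
noncomputable def demazure {σ : Type} [DecidableEq σ] (i j : σ)
    (f : MvPolynomial σ ℤ) : MvPolynomial σ ℤ := by
  classical
  exact if h : ∃ g, (X i - X j) * g = f - rename (Equiv.swap i j) f then h.choose else 0

/-- The elementary symmetric polynomial `e_n` in the set of variables `s`. -/
noncomputable def eOn {σ : Type} [DecidableEq σ] (s : Finset σ) (n : ℕ) : MvPolynomial σ ℤ :=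
  ∑ t ∈ Finset.powersetCard n s, ∏ i ∈ t, X i

/-- The complete homogeneous symmetric polynomial `h_n` in the set of variables `s`. -/
noncomputable def hOn {σ : Type} [DecidableEq σ] (s : Finset σ) (n : ℕ) : MvPolynomial σ ℤ :=
  ∑ m ∈ s.sym n, (m.1.map X).prod

/-- The sequence `Q_{r,j}`: `Q_{r,0} = e_r(Y - x_r)` and `Q_{r,j} = ∂_{r-j}(Q_{r,j-1})`,
in `ℤ[X,Y]` with `X`-variables `Sum.inl` and `Y`-variables `Sum.inr` (`0`-indexed). -/
noncomputable def Qseq (r : ℕ) (hr : 0 < r) : ℕ → MvPolynomial (Fin r ⊕ Fin r) ℤ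
  | 0 => ∑ j ∈ Finset.range (r + 1),
      (-1) ^ j * eOn (Finset.univ.image Sum.inr) (r - j) *
        X (Sum.inl ⟨r - 1, Nat.sub_lt hr one_pos⟩) ^ j
  | (j + 1) =>
      demazure (Sum.inl ⟨(r - j - 2) % r, Nat.mod_lt _ hr⟩)
        (Sum.inl ⟨(r - j - 1) % r, Nat.mod_lt _ hr⟩) (Qseq r hr j)

lemma demazure_spec {σ : Type} [DecidableEq σ] {i j : σ} (hij : i ≠ j)
    {f g : MvPolynomial σ ℤ} (h : (X i - X j) * g = f - rename (Equiv.swap i j) f) :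
    demazure i j f = g := by
  have hex : ∃ g, (X i - X j) * g = f - rename (Equiv.swap i j) f := ⟨g, h⟩
  have hne : (X i - X j : MvPolynomial σ ℤ) ≠ 0 :=
    sub_ne_zero.mpr (fun hXX => hij (X_injective hXX))
  unfold demazure
  rw [dif_pos hex]
  exact mul_left_cancel₀ hne (hex.choose_spec.trans h.symm)

lemma hOn_zero {σ : Type} [DecidableEq σ] (s : Finset σ) : hOn s 0 = 1 := by
  simp only [hOn, Finset.sym_zero, Finset.sum_singleton]
  rfl

lemma hOn_empty {σ : Type} [DecidableEq σ] (n : ℕ) : hOn (∅ : Finset σ) (n + 1) = 0 := by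
  simp [hOn, Finset.sym_empty]

lemma sym_filter_mem {σ : Type} [DecidableEq σ] (u : σ) (s : Finset σ) (hu : u ∈ s) (n : ℕ) :
    (s.sym (n + 1)).filter (fun m => u ∈ m) = (s.sym n).image (Sym.cons u) := by
  ext m
  simp only [Finset.mem_filter, Finset.mem_image, Finset.mem_sym_iff]
  constructor
  · rintro ⟨hm, hum⟩
    refine ⟨m.erase u hum, ?_, Sym.cons_erase hum⟩
    intro a ha
    rw [← Sym.mem_coe, Sym.coe_erase] at ha
    exact hm a (Sym.mem_coe.mpr (Multiset.mem_of_mem_erase ha))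
  · rintro ⟨m', hm', rfl⟩
    refine ⟨?_, Sym.mem_cons_self u m'⟩
    intro a ha
    rcases Sym.mem_cons.mp ha with rfl | ha
    · exact hu
    · exact hm' a ha

lemma sym_insert_filter_not_mem {σ : Type} [DecidableEq σ] (u : σ) (s : Finset σ) (hu : u ∉ s)
    (n : ℕ) : ((insert u s).sym n).filter (fun m => u ∉ m) = s.sym n := by
  ext m
  simp only [Finset.mem_filter, Finset.mem_sym_iff, Finset.mem_insert]
  constructor
  · rintro ⟨hm, hum⟩ 
    intro a ha
    rcases hm a ha with rfl | h
    · exact absurd ha hum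
    · exact h
  · intro hm
    exact ⟨fun a ha => Or.inr (hm a ha), fun hum => hu (hm u hum)⟩

lemma hOn_insert_succ {σ : Type} [DecidableEq σ] {u : σ} {s : Finset σ} (hu : u ∉ s) (n : ℕ) :
    hOn (insert u s) (n + 1) = X u * hOn (insert u s) n + hOn s (n + 1) := by
  classical
  unfold hOn
  rw [← Finset.sum_filter_add_sum_filter_not ((insert u s).sym (n+1)) (fun m => u ∈ m),
    sym_filter_mem u _ (Finset.mem_insert_self u s) n,
    sym_insert_filter_not_mem u s hu]
  congr 1
  rw [Finset.sum_image (fun a _ b _ h => (Sym.cons_inj_right u a b).mp h), Finset.mul_sum]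
  refine Finset.sum_congr rfl fun m _ => ?_
  rw [Sym.cons, Multiset.map_cons, Multiset.prod_cons]

lemma hOn_singleton {σ : Type} [DecidableEq σ] (u : σ) (n : ℕ) : hOn ({u} : Finset σ) n = X u ^ n := by
  induction n with
  | zero => simp [hOn_zero]
  | succ n ih =>
    have : ({u} : Finset σ) = insert u ∅ := by simp
    rw [this, hOn_insert_succ (Finset.notMem_empty u) n, ← this, ih, hOn_empty, pow_succ]
    ring

lemma hOn_insert_sub_insert {σ : Type} [DecidableEq σ] {u v : σ} {s : Finset σ}
    (hu : u ∉ s) (hv : v ∉ s) (huv : u ≠ v) (n : ℕ) :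
    hOn (insert u s) (n + 1) - hOn (insert v s) (n + 1)
      = (X u - X v) * hOn (insert u (insert v s)) n := by
  induction n with
  | zero =>
    rw [hOn_insert_succ hu 0, hOn_insert_succ hv 0, hOn_zero, hOn_zero, hOn_zero]
    ring
  | succ n ih =>
    have hu' : u ∉ insert v s := by simp [huv, hu]
    rw [hOn_insert_succ hu (n + 1), hOn_insert_succ hv (n + 1),
      hOn_insert_succ hu' n]
    have ihe : hOn (insert u s) (n + 1)
        = hOn (insert v s) (n + 1) + (X u - X v) * hOn (insert u (insert v s)) n := by
      rw [← ih]; ring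
    rw [ihe]
    have : insert v s = insert v (insert u s) ∨ True := Or.inr trivial
    -- h_{n+2}(v,s) appears; also need hOn (insert v s) (n+1) related?  just ring after substituting
    ring

lemma rename_eOn {σ τ : Type} [DecidableEq σ] [DecidableEq τ] {e : σ → τ}
    (he : Function.Injective e) (s : Finset σ) (n : ℕ) :
    rename e (eOn s n) = eOn (s.image e) n := by
  unfold eOn
  have h1 : s.image e = s.map ⟨e, he⟩ := by simp [Finset.map_eq_image]
  rw [map_sum, h1, Finset.powersetCard_map, Finset.sum_map]
  refine Finset.sum_congr rfl fun t _ => ?_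
  rw [show (Finset.mapEmbedding ⟨e, he⟩).toEmbedding t = t.map ⟨e, he⟩ from Finset.mapEmbedding_apply,
    Finset.prod_map, map_prod]
  simp [rename_X]

lemma sym_map_exists {σ τ : Type} [DecidableEq σ] [DecidableEq τ] (e : σ → τ) (s : Finset σ)
    (n : ℕ) : ∀ (m : Sym τ n), (∀ a ∈ m, a ∈ s.image e) →
      ∃ m', (∀ b ∈ m', b ∈ s) ∧ Sym.map e m' = m := by
  induction n with
  | zero =>
    intro m _
    exact ⟨∅, fun b hb => absurd hb (Multiset.notMem_zero b), Subsingleton.elim _ _⟩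
  | succ n ihn =>
    intro m hm
    obtain ⟨a, m', rfl⟩ := Sym.exists_eq_cons_of_succ m
    obtain ⟨m'', hm'', hmap⟩ := ihn m' (fun b hb => hm b (Sym.mem_cons_of_mem hb))
    obtain ⟨b, hb, rfl⟩ := Finset.mem_image.mp (hm a (Sym.mem_cons_self a m'))
    refine ⟨b ::ₛ m'', ?_, by rw [Sym.map_cons, hmap]⟩
    intro c hc
    rcases Sym.mem_cons.mp hc with rfl | hc
    · exact hb
    · exact hm'' c hc

lemma sym_image {σ τ : Type} [DecidableEq σ] [DecidableEq τ] {e : σ → τ}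
    (he : Function.Injective e) (s : Finset σ) (n : ℕ) :
    (s.image e).sym n = (s.sym n).image (Sym.map e) := by
  ext m
  simp only [Finset.mem_image, Finset.mem_sym_iff]
  constructor
  · intro hm
    obtain ⟨m', hm', rfl⟩ := sym_map_exists e s n m (fun a ha => Finset.mem_image.mpr (hm a ha))
    exact ⟨m', hm', rfl⟩
  · rintro ⟨m', hm', rfl⟩ a ha
    obtain ⟨b, hb, rfl⟩ := Sym.mem_map.mp ha
    exact ⟨b, hm' b hb, rfl⟩

lemma rename_hOn {σ τ : Type} [DecidableEq σ] [DecidableEq τ] {e : σ → τ}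
    (he : Function.Injective e) (s : Finset σ) (n : ℕ) :
    rename e (hOn s n) = hOn (s.image e) n := by
  unfold hOn
  rw [map_sum, sym_image he s n,
    Finset.sum_image (fun a _ b _ h => Sym.map_injective he n h)]
  refine Finset.sum_congr rfl fun m _ => ?_
  simp [map_multiset_prod, Sym.coe_map, Multiset.map_map, Function.comp_def, rename_X]


/-- `Q_{r,j} = e_{r-j}(Y - {x_{r-j},…,x_r}) = Σ_i (-1)^i e_{r-j-i}(Y) h_i(x_{r-j},…,x_r)`. -/
theorem Qseq_eq (r : ℕ) (hr : 0 < r) (j : ℕ) (hj : j ≤ r - 1) :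
    Qseq r hr j
      = ∑ i ∈ Finset.range (r - j + 1),
          (-1) ^ i * eOn (Finset.univ.image Sum.inr) (r - j - i) *
            hOn ((Finset.univ.filter fun t : Fin r => r - j - 1 ≤ (t : ℕ)).image Sum.inl) i := by
  induction j with
  | zero =>
    have hset : (Finset.univ.filter fun t : Fin r => r - 0 - 1 ≤ (t : ℕ))
        = {(⟨r - 1, Nat.sub_lt hr one_pos⟩ : Fin r)} := by
      ext t
      simp only [Finset.mem_filter, Finset.mem_univ, true_and, Finset.mem_singleton, Fin.ext_iff]
      have := t.isLt
      omega
    rw [Qseq, hset]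
    simp only [Nat.sub_zero, Finset.image_singleton, hOn_singleton]
  | succ j ih =>
    have hj' : j ≤ r - 1 := by omega
    have ha : r - j - 2 < r := by omega
    have hb : r - j - 1 < r := by omega
    set aF : Fin r := ⟨r - j - 2, ha⟩ with haF
    set bF : Fin r := ⟨r - j - 1, hb⟩ with hbF
    have ea : (⟨(r - j - 2) % r, Nat.mod_lt _ hr⟩ : Fin r) = aF := Fin.ext (Nat.mod_eq_of_lt ha)
    have eb : (⟨(r - j - 1) % r, Nat.mod_lt _ hr⟩ : Fin r) = bF := Fin.ext (Nat.mod_eq_of_lt hb)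
    rw [Qseq, ea, eb]
    have hne : (Sum.inl aF : Fin r ⊕ Fin r) ≠ Sum.inl bF := by
      simp only [ne_eq, Sum.inl.injEq, Fin.ext_iff, haF, hbF, Fin.val_mk,
        Nat.mod_eq_of_lt ha, Nat.mod_eq_of_lt hb]
      omega
    apply demazure_spec hne
    rw [ih hj']
    set T : Finset (Fin r) := Finset.univ.filter (fun t : Fin r => r - j ≤ (t : ℕ)) with hT
    have haT : aF ∉ T := by simp only [hT, Finset.mem_filter, haF]; omega
    have hbT : bF ∉ T := by simp only [hT, Finset.mem_filter, hbF]; omega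
    have hSj : (Finset.univ.filter fun t : Fin r => r - j - 1 ≤ (t : ℕ)) = insert bF T := by
      ext t
      simp only [hT, Finset.mem_filter, Finset.mem_univ, true_and, Finset.mem_insert, Fin.ext_iff,
        hbF]
      have := t.isLt
      omega
    have hSj1 : (Finset.univ.filter fun t : Fin r => r - (j + 1) - 1 ≤ (t : ℕ))
        = insert aF (insert bF T) := by
      ext t
      simp only [hT, Finset.mem_filter, Finset.mem_univ, true_and, Finset.mem_insert, Fin.ext_iff,
        haF, hbF]
      have := t.isLt
      omega
    rw [hSj, hSj1]
    simp only [Finset.image_insert]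
    -- compute the rename of the sum
    have hYswap : ((Finset.univ.image Sum.inr : Finset (Fin r ⊕ Fin r)).image
        (Equiv.swap (Sum.inl aF) (Sum.inl bF))) = Finset.univ.image Sum.inr := by
      rw [Finset.image_image]
      refine Finset.image_congr fun y _ => ?_
      exact Equiv.swap_apply_of_ne_of_ne (by simp) (by simp)
    have hTswap : ((T.image Sum.inl : Finset (Fin r ⊕ Fin r)).image
        (Equiv.swap (Sum.inl aF) (Sum.inl bF))) = T.image Sum.inl := by
      rw [Finset.image_image]
      refine Finset.image_congr fun t ht => ?_
      have ht' : r - j ≤ (t : ℕ) := (Finset.mem_filter.mp ht).2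
      refine Equiv.swap_apply_of_ne_of_ne ?_ ?_ <;>
        · simp only [ne_eq, Function.comp, Sum.inl.injEq, Fin.ext_iff, haF, hbF]
          omega
    have hSswap : ((insert (Sum.inl bF) (T.image Sum.inl) : Finset (Fin r ⊕ Fin r)).image
        (Equiv.swap (Sum.inl aF) (Sum.inl bF)))
        = insert (Sum.inl aF) (T.image Sum.inl) := by
      rw [Finset.image_insert, Equiv.swap_apply_right, hTswap]
    have hrename : rename (Equiv.swap (Sum.inl aF) (Sum.inl bF))
        (∑ i ∈ Finset.range (r - j + 1),
          (-1) ^ i * eOn (Finset.univ.image Sum.inr) (r - j - i) *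
            hOn (insert (Sum.inl bF) (T.image Sum.inl : Finset (Fin r ⊕ Fin r))) i)
        = ∑ i ∈ Finset.range (r - j + 1),
          (-1) ^ i * eOn (Finset.univ.image Sum.inr) (r - j - i) *
            hOn (insert (Sum.inl aF) (T.image Sum.inl : Finset (Fin r ⊕ Fin r))) i := by
      rw [map_sum]
      refine Finset.sum_congr rfl fun i _ => ?_
      rw [map_mul, map_mul, map_pow, map_neg, map_one,
        rename_eOn (Equiv.injective _), rename_hOn (Equiv.injective _), hYswap, hSswap]
    rw [hrename]
    -- now a purely algebraic identity about hOn
    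
    set T' : Finset (Fin r ⊕ Fin r) := T.image Sum.inl with hT'
    have haT' : (Sum.inl aF : Fin r ⊕ Fin r) ∉ T' := by
      simp only [hT', Finset.mem_image, Sum.inl.injEq]
      rintro ⟨t, ht, rfl⟩
      exact haT ht
    have hbT' : (Sum.inl bF : Fin r ⊕ Fin r) ∉ T' := by
      simp only [hT', Finset.mem_image, Sum.inl.injEq]
      rintro ⟨t, ht, rfl⟩
      exact hbT ht
    have hba : (Sum.inl bF : Fin r ⊕ Fin r) ≠ Sum.inl aF := hne.symm
    rw [← Finset.sum_sub_distrib,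
      show r - (j + 1) + 1 = r - j from by omega, Finset.mul_sum,
      Finset.sum_range_succ' (fun i =>
        (-1) ^ i * eOn (Finset.univ.image Sum.inr) (r - j - i) *
            hOn (insert (Sum.inl bF) T') i -
          (-1) ^ i * eOn (Finset.univ.image Sum.inr) (r - j - i) *
            hOn (insert (Sum.inl aF) T') i) (r - j)]
    simp only [pow_zero, one_mul, hOn_zero, mul_one, sub_self, add_zero]
    refine Finset.sum_congr rfl fun i _ => ?_
    rw [← mul_sub, hOn_insert_sub_insert hbT' haT' hba i, Finset.insert_comm,
      show r - j - (i + 1) = r - (j + 1) - i from by omega, pow_succ]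
    ring
end

section
/- The ideal of R = ℤ[x_1,...,x_r] ⊗ ℤ[y_1,...,y_r]^{S_r} generated by Q_{r,0},...,Q_{r,r-1}, where Q_{r,j} := e_{r-j}(Y - {x_{r-j},...,x_r}), equals the ideal generated by the differences e_i(x_1,...,x_r) - e_i(y_1,...,y_r) for i = 1,...,r. -/
open MvPolynomial

/-- The ring `R = ℤ[x_1,…,x_r] ⊗ ℤ[y_1,…,y_r]^{S_r}`, presented as the polynomial ring in the
`x_i` (the `Sum.inl` variables) and the elementary symmetric polynomials `e_1(Y),…,e_r(Y)`
(the `Sum.inr` variables, via the fundamental theorem of symmetric polynomials).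
`Evar r n` is the element corresponding to `e_n(Y)` (with `e_0(Y) = 1`). -/
noncomputable def Evar (r n : ℕ) : MvPolynomial (Fin r ⊕ Fin r) ℤ :=
  if _h0 : n = 0 then 1 else if h : n ≤ r then X (Sum.inr ⟨n - 1, by omega⟩) else 0

/-- `QE r j` corresponds to `Q_{r,j} = e_{r-j}(Y - {x_{r-j},…,x_r})
= Σ_i (-1)^i e_{r-j-i}(Y) h_i(x_{r-j},…,x_r)`. -/
noncomputable def QE (r j : ℕ) : MvPolynomial (Fin r ⊕ Fin r) ℤ :=
  ∑ i ∈ Finset.range (r - j + 1),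
    (-1) ^ i * Evar r (r - j - i) *
      hOn ((Finset.univ.filter fun t : Fin r => r - j - 1 ≤ (t : ℕ)).image Sum.inl) i

open Finset
section aux

section basic
variable {σ : Type} [DecidableEq σ] (s : Finset σ)

lemma eOn_zero : eOn s 0 = 1 := by simp [eOn]

lemma hOn_zero_s9 : hOn s 0 = 1 := by
  simp only [hOn, Finset.sym_zero, Finset.sum_singleton]
  rfl

lemma eOn_eq_zero {n : ℕ} (h : s.card < n) : eOn s n = 0 := by
  rw [eOn, Finset.powersetCard_eq_empty.2 h, Finset.sum_empty]

lemma eOn_insert {a : σ} (h : a ∉ s) (n : ℕ) :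
    eOn (insert a s) (n + 1) = eOn s (n + 1) + X a * eOn s n := by
  rw [eOn, Finset.powersetCard_succ_insert h, Finset.sum_union, Finset.sum_image]
  · rw [eOn, eOn, Finset.mul_sum]
    congr 1
    refine Finset.sum_congr rfl fun t ht => ?_
    rw [Finset.prod_insert fun hat => h ((Finset.mem_powersetCard.1 ht).1 hat)]
  · intro t ht u hu htu
    have ht' := (Finset.mem_powersetCard.1 ht).1
    have hu' := (Finset.mem_powersetCard.1 hu).1
    ext b
    constructor <;> intro hb
    · have : b ∈ insert a u := htu ▸ Finset.mem_insert_of_mem hb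
      rcases Finset.mem_insert.1 this with rfl | hbu
      · exact absurd (ht' hb) h
      · exact hbu
    · have : b ∈ insert a t := htu ▸ Finset.mem_insert_of_mem hb
      rcases Finset.mem_insert.1 this with rfl | hbt
      · exact absurd (hu' hb) h
      · exact hbt
  · rw [Finset.disjoint_left]
    rintro t ht hti
    obtain ⟨u, hu, rfl⟩ := Finset.mem_image.1 hti
    exact h ((Finset.mem_powersetCard.1 ht).1 (Finset.mem_insert_self a u))

lemma hOn_insert {a : σ} (h : a ∉ s) (n : ℕ) :
    hOn (insert a s) n = ∑ p ∈ (Finset.range (n + 1)).sigma (fun i => s.sym (n - i)),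
      X a ^ p.1 * (p.2.1.map X).prod := by
  rw [hOn]
  refine Finset.sum_nbij'
    (i := fun m => (⟨((m.filterNe a).1 : ℕ), (m.filterNe a).2⟩ : (i : ℕ) × Sym σ (n - i)))
    (j := fun p => if hp : p.1 < n + 1 then Sym.fill a ⟨p.1, hp⟩ p.2 else Sym.replicate n a)
    ?_ ?_ ?_ ?_ ?_
  · intro m hm
    refine Finset.mem_sigma.2 ⟨Finset.mem_range.2 (m.filterNe a).1.is_lt, ?_⟩
    have := Finset.sym_filterNe_mem a hm
    rwa [Finset.erase_insert h] at this
  · rintro ⟨i0, m0⟩ hp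
    have hp1 := Finset.mem_range.1 (Finset.mem_sigma.1 hp).1
    have hp2 := (Finset.mem_sigma.1 hp).2
    dsimp only
    rw [dif_pos hp1]
    exact Finset.sym_fill_mem a hp2
  · intro m hm
    dsimp only
    rw [dif_pos (m.filterNe a).1.is_lt]
    exact Sym.fill_filterNe a m
  · rintro ⟨i0, m0⟩ hp
    have hp1 := Finset.mem_range.1 (Finset.mem_sigma.1 hp).1
    have hp2 := (Finset.mem_sigma.1 hp).2
    have ha : a ∉ m0 := fun ham => h (Finset.mem_sym_iff.1 hp2 a ham)
    dsimp only
    rw [dif_pos hp1, Sym.filter_ne_fill a ⟨⟨i0, hp1⟩, m0⟩ ha]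
  · intro m hm
    dsimp only
    conv_lhs => rw [← Sym.fill_filterNe a m]
    simp only [Sym.val_eq_coe, Sym.coe_fill, Multiset.map_add, Multiset.prod_add,
      Multiset.map_replicate, Multiset.prod_replicate, mul_comm, Sym.coe_replicate]

end basic

lemma coeff_mul_range {R : Type} [CommRing R] (f g : PowerSeries R) (n : ℕ) :
    (PowerSeries.coeff n) (f * g)
      = ∑ k ∈ Finset.range (n + 1), (PowerSeries.coeff k) f * (PowerSeries.coeff (n - k)) g := by
  rw [PowerSeries.coeff_mul, Finset.Nat.sum_antidiagonal_eq_sum_range_succ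
    (fun k l => (PowerSeries.coeff k f) * (PowerSeries.coeff l g)) n]

section series
variable {σ : Type} [DecidableEq σ]

/-- `∏_{i∈s} (1 + x_i T)`, whose coefficients are the `eOn s n`. -/
noncomputable def Pser (s : Finset σ) : PowerSeries (MvPolynomial σ ℤ) :=
  ∏ i ∈ s, (1 + PowerSeries.C (X i) * PowerSeries.X)

/-- `∏_{i∈s} 1/(1 + x_i T)`, whose coefficients are the `(-1)^n hOn s n`. -/
noncomputable def Hser (s : Finset σ) : PowerSeries (MvPolynomial σ ℤ) :=
  PowerSeries.mk fun n => (-1) ^ n * hOn s n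

lemma coeff_Pser (s : Finset σ) (n : ℕ) :
    (PowerSeries.coeff n) (Pser s) = eOn s n := by
  induction s using Finset.induction generalizing n with
  | empty =>
    cases n with
    | zero => simp [Pser, eOn_zero]
    | succ n => simp [Pser, eOn_eq_zero (∅ : Finset σ) (Nat.succ_pos n), PowerSeries.coeff_one]
  | @insert a s ha ih =>
    rw [Pser, Finset.prod_insert ha, add_mul, one_mul, mul_assoc]
    cases n with
    | zero =>
      rw [map_add, PowerSeries.coeff_zero_eq_constantCoeff, map_mul, map_mul,
        PowerSeries.constantCoeff_X, zero_mul, mul_zero, add_zero,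
        ← PowerSeries.coeff_zero_eq_constantCoeff, ← Pser, ih, eOn_zero, eOn_zero]
    | succ n =>
      rw [map_add, PowerSeries.coeff_C_mul, PowerSeries.coeff_succ_X_mul, ← Pser, ih, ih,
        eOn_insert s ha]

lemma hOn_insert' {a : σ} (s : Finset σ) (h : a ∉ s) (n : ℕ) :
    hOn (insert a s) n = ∑ k ∈ Finset.range (n + 1), X a ^ k * hOn s (n - k) := by
  rw [hOn_insert s h n, Finset.sum_sigma]
  exact Finset.sum_congr rfl fun k _ => by rw [hOn, Finset.mul_sum]

lemma Hser_empty : Hser (∅ : Finset σ) = 1 := by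
  refine PowerSeries.ext fun n => ?_
  cases n with
  | zero => simp [Hser, hOn_zero_s9]
  | succ n => simp [Hser, hOn, PowerSeries.coeff_one]

lemma Hser_insert {a : σ} (s : Finset σ) (h : a ∉ s) :
    Hser (insert a s) = (PowerSeries.mk fun n => (- X a) ^ n) * Hser s := by
  refine PowerSeries.ext fun n => ?_
  rw [coeff_mul_range]
  simp only [Hser, PowerSeries.coeff_mk, hOn_insert' s h, Finset.mul_sum]
  refine Finset.sum_congr rfl fun k hk => ?_
  have hk' : k ≤ n := Nat.lt_succ_iff.1 (Finset.mem_range.1 hk)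
  have h1 : ((-1 : MvPolynomial σ ℤ)) ^ n = (-1) ^ k * (-1) ^ (n - k) := by
    rw [← pow_add, Nat.add_sub_cancel' hk']
  rw [neg_pow, h1]
  ring

lemma Pser_geom {a : σ} :
    (1 + PowerSeries.C (X a) * PowerSeries.X) * (PowerSeries.mk fun n => (- X a) ^ n)
      = (1 : PowerSeries (MvPolynomial σ ℤ)) := by
  refine PowerSeries.ext fun n => ?_
  rw [add_mul, one_mul, mul_assoc, map_add, PowerSeries.coeff_C_mul]
  cases n with
  | zero => simp [PowerSeries.coeff_one]
  | succ n =>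
    rw [PowerSeries.coeff_succ_X_mul, PowerSeries.coeff_mk, PowerSeries.coeff_mk,
      PowerSeries.coeff_one]
    simp [pow_succ]
    ring

lemma Pser_mul_Hser (s : Finset σ) : Pser s * Hser s = 1 := by
  induction s using Finset.induction with
  | empty => rw [Hser_empty, Pser, Finset.prod_empty, one_mul]
  | @insert a s ha ih =>
    rw [Pser, Finset.prod_insert ha, Hser_insert s ha, ← Pser,
      show (1 + PowerSeries.C (X a) * PowerSeries.X) * Pser s
          * ((PowerSeries.mk fun n => (- X a) ^ n) * Hser s)
        = ((1 + PowerSeries.C (X a) * PowerSeries.X) * (PowerSeries.mk fun n => (- X a) ^ n))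
          * (Pser s * Hser s) by ring, Pser_geom, ih, one_mul]

lemma Pser_union {s t : Finset σ} (h : Disjoint s t) :
    Pser (s ∪ t) = Pser s * Pser t := by
  rw [Pser, Pser, Pser, Finset.prod_union h]

lemma Hser_union {s t : Finset σ} (h : Disjoint s t) :
    Hser (s ∪ t) = Hser s * Hser t := by
  have e1 := Pser_mul_Hser (s ∪ t)
  have : Hser s * Hser t = (Pser (s ∪ t) * Hser (s ∪ t)) * (Hser s * Hser t) := by
    rw [e1, one_mul]
  rw [this, Pser_union h,
    show Pser s * Pser t * Hser (s ∪ t) * (Hser s * Hser t)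
      = (Pser s * Hser s) * (Pser t * Hser t) * Hser (s ∪ t) by ring,
    Pser_mul_Hser, Pser_mul_Hser, one_mul, one_mul]

end series

section main
variable (r : ℕ)

noncomputable def Xall : Finset (Fin r ⊕ Fin r) := Finset.univ.image Sum.inl

noncomputable def Sjset (j : ℕ) : Finset (Fin r ⊕ Fin r) :=
  (Finset.univ.filter fun t : Fin r => r - j - 1 ≤ (t : ℕ)).image Sum.inl

noncomputable def Ajset (j : ℕ) : Finset (Fin r ⊕ Fin r) :=
  (Finset.univ.filter fun t : Fin r => (t : ℕ) < r - j - 1).image Sum.inl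

noncomputable def Eyser : PowerSeries (MvPolynomial (Fin r ⊕ Fin r) ℤ) :=
  PowerSeries.mk fun n => Evar r n

noncomputable def Gser : PowerSeries (MvPolynomial (Fin r ⊕ Fin r) ℤ) :=
  Eyser r * Hser (Xall r)

noncomputable def Fn (n : ℕ) : MvPolynomial (Fin r ⊕ Fin r) ℤ :=
  PowerSeries.coeff n (Gser r)

lemma disj_SA (j : ℕ) : Disjoint (Sjset r j) (Ajset r j) := by
  rw [Sjset, Ajset, Finset.disjoint_image Sum.inl_injective, Finset.disjoint_left]
  intro t ht ht'
  have h1 : r - j - 1 ≤ (t : ℕ) := (Finset.mem_filter.1 ht).2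
  have h2 : (t : ℕ) < r - j - 1 := (Finset.mem_filter.1 ht').2
  omega

lemma union_SA (j : ℕ) : Sjset r j ∪ Ajset r j = Xall r := by
  have huniv : (Finset.univ.filter fun t : Fin r => r - j - 1 ≤ (t : ℕ))
      ∪ (Finset.univ.filter fun t : Fin r => (t : ℕ) < r - j - 1) = Finset.univ := by
    ext t
    simp only [Finset.mem_union, Finset.mem_filter, Finset.mem_univ, true_and, iff_true]
    omega
  rw [Sjset, Ajset, ← Finset.image_union, huniv, Xall]

lemma card_Ajset {j : ℕ} (hj : j < r) : (Ajset r j).card = r - j - 1 := by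
  rw [Ajset, Finset.card_image_of_injective _ Sum.inl_injective]
  have : (Finset.univ.filter fun t : Fin r => (t : ℕ) < r - j - 1)
      = Finset.Iio (⟨r - j - 1, by omega⟩ : Fin r) := by
    ext t
    simp [Fin.lt_def]
  rw [this, Fin.card_Iio]

lemma QE_eq (j : ℕ) :
    QE r j = PowerSeries.coeff (r - j) (Eyser r * Hser (Sjset r j)) := by
  rw [coeff_mul_range, ← Finset.sum_range_reflect, QE]
  refine Finset.sum_congr rfl fun i hi => ?_
  have hi' : i ≤ r - j := Nat.lt_succ_iff.1 (Finset.mem_range.1 hi)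
  rw [show r - j + 1 - 1 - i = r - j - i from by omega, Eyser, Hser, PowerSeries.coeff_mk,
    PowerSeries.coeff_mk, show r - j - (r - j - i) = i from by omega, Sjset]
  ring

lemma Eyser_Hser_Sj (j : ℕ) :
    Eyser r * Hser (Sjset r j) = Gser r * Pser (Ajset r j) := by
  rw [Gser, mul_assoc]
  congr 1
  rw [← union_SA r j, Hser_union (disj_SA r j), mul_assoc, mul_comm (Hser (Ajset r j)),
    Pser_mul_Hser, mul_one]

lemma coeff_zero_Gser : PowerSeries.coeff 0 (Gser r) = 1 := by
  rw [Gser, coeff_mul_range]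
  simp [Eyser, Hser, Evar, hOn_zero_s9]

lemma QE_expand {m : ℕ} (h1 : 1 ≤ m) (h2 : m ≤ r) :
    QE r (r - m) = Fn r m + ∑ k ∈ Finset.Ico 1 m, eOn (Ajset r (r - m)) (m - k) * Fn r k := by
  have hm : r - (r - m) = m := by omega
  rw [QE_eq, hm, Eyser_Hser_Sj, coeff_mul_range]
  simp only [coeff_Pser]
  rw [Finset.sum_range_succ, Finset.range_eq_Ico,
    Finset.sum_eq_sum_Ico_succ_bot (by omega : 0 < m)]
  rw [Nat.sub_zero, eOn_eq_zero _ (by rw [card_Ajset r (by omega : r - m < r)]; omega), mul_zero,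
    zero_add, Nat.sub_self, eOn_zero, mul_one, add_comm]
  simp only [Fn, zero_add]
  refine congrArg _ ?_
  exact Finset.sum_congr rfl fun k hk => mul_comm _ _

lemma Pser_sub_Eyser :
    Pser (Xall r) - Eyser r = (1 - Gser r) * Pser (Xall r) := by
  rw [sub_mul, one_mul, Gser,
    show Eyser r * Hser (Xall r) * Pser (Xall r) = Eyser r * (Pser (Xall r) * Hser (Xall r))
      from by ring, Pser_mul_Hser, mul_one]

lemma D_expand {m : ℕ} (h1 : 1 ≤ m) (h2 : m ≤ r) :
    -(eOn (Xall r) m - Evar r m)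
      = Fn r m + ∑ k ∈ Finset.Ico 1 m, eOn (Xall r) (m - k) * Fn r k := by
  have hD : eOn (Xall r) m - Evar r m = PowerSeries.coeff m (Pser (Xall r) - Eyser r) := by
    rw [map_sub, coeff_Pser, Eyser, PowerSeries.coeff_mk]
  rw [hD, Pser_sub_Eyser, coeff_mul_range]
  simp only [coeff_Pser, map_sub]
  rw [Finset.sum_range_succ, Finset.range_eq_Ico,
    Finset.sum_eq_sum_Ico_succ_bot (by omega : 0 < m)]
  rw [coeff_zero_Gser, PowerSeries.coeff_one, if_pos rfl, sub_self, zero_mul, zero_add,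
    Nat.sub_self, eOn_zero, mul_one, PowerSeries.coeff_one, if_neg (by omega : ¬ m = 0)]
  rw [neg_add, add_comm]
  congr 1
  · rw [zero_sub, neg_neg, Fn]
  · rw [← Finset.sum_neg_distrib]
    refine Finset.sum_congr rfl fun k hk => ?_
    have hk1 := (Finset.mem_Ico.1 hk).1
    rw [PowerSeries.coeff_one, if_neg (by omega : ¬ k = 0), zero_sub, Fn]
    ring

end main

lemma span_triangular {A : Type*} [CommRing A] (r : ℕ) (u v : ℕ → A) (c : ℕ → ℕ → A)
    (h : ∀ m, 1 ≤ m → m ≤ r → v m = u m + ∑ k ∈ Finset.Ico 1 m, c m k * u k) :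
    Ideal.span (v '' {m | 1 ≤ m ∧ m ≤ r}) = Ideal.span (u '' {m | 1 ≤ m ∧ m ≤ r}) := by
  have hu : ∀ m, 1 ≤ m → m ≤ r → u m ∈ Ideal.span (v '' {m | 1 ≤ m ∧ m ≤ r}) := by
    intro m
    induction m using Nat.strong_induction_on with
    | _ m ih =>
      intro hm1 hm2
      have hv : v m ∈ Ideal.span (v '' {m | 1 ≤ m ∧ m ≤ r}) :=
        Ideal.subset_span ⟨m, ⟨hm1, hm2⟩, rfl⟩
      have he : u m = v m - ∑ k ∈ Finset.Ico 1 m, c m k * u k := by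
        rw [h m hm1 hm2]; ring
      rw [he]
      refine sub_mem hv (Ideal.sum_mem _ fun k hk => ?_)
      obtain ⟨hk1, hk2⟩ := Finset.mem_Ico.1 hk
      exact Ideal.mul_mem_left _ _ (ih k hk2 hk1 (le_trans (le_of_lt hk2) hm2))
  refine le_antisymm ?_ ?_
  · rw [Ideal.span_le]
    rintro x ⟨m, ⟨hm1, hm2⟩, rfl⟩
    rw [h m hm1 hm2]
    refine add_mem (Ideal.subset_span ⟨m, ⟨hm1, hm2⟩, rfl⟩)
      (Ideal.sum_mem _ fun k hk => Ideal.mul_mem_left _ _ (Ideal.subset_span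
        ⟨k, ⟨(Finset.mem_Ico.1 hk).1,
          le_trans (le_of_lt (Finset.mem_Ico.1 hk).2) hm2⟩, rfl⟩))
  · rw [Ideal.span_le]
    rintro x ⟨m, ⟨hm1, hm2⟩, rfl⟩
    exact hu m hm1 hm2

lemma span_neg_image {A : Type*} [CommRing A] (f : ℕ → A) (S : Set ℕ) :
    Ideal.span ((fun m => -(f m)) '' S) = Ideal.span (f '' S) := by
  refine le_antisymm ?_ ?_
  · rw [Ideal.span_le]
    rintro x ⟨m, hm, rfl⟩
    exact neg_mem (Ideal.subset_span ⟨m, hm, rfl⟩)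
  · rw [Ideal.span_le]
    rintro x ⟨m, hm, rfl⟩
    have : f m = -(-(f m)) := by ring
    rw [this]
    exact neg_mem (Ideal.subset_span ⟨m, hm, rfl⟩)


end aux

/-- The ideal of `R = ℤ[x_1,…,x_r] ⊗ ℤ[y_1,…,y_r]^{S_r}` generated by `Q_{r,0},…,Q_{r,r-1}`
equals the ideal generated by the differences `e_i(X) - e_i(Y)` for `i = 1,…,r`. -/
theorem span_QE_eq_span_esymm_sub (r : ℕ) :
    Ideal.span ((fun j => QE r j) '' {j | j < r})
      = Ideal.span
          ((fun i => eOn (Finset.univ.image Sum.inl) (i + 1) - Evar r (i + 1)) '' {i | i < r}) := by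
  have hset1 : (fun j => QE r j) '' {j | j < r}
      = (fun m => QE r (r - m)) '' {m | 1 ≤ m ∧ m ≤ r} := by
    ext x
    constructor
    · rintro ⟨j, hj, rfl⟩
      have hj' : j < r := hj
      refine ⟨r - j, ⟨show 1 ≤ r - j from by omega, show r - j ≤ r from by omega⟩, ?_⟩
      show QE r (r - (r - j)) = QE r j
      rw [show r - (r - j) = j from by omega]
    · rintro ⟨m, hm, rfl⟩
      have h1 : 1 ≤ m := hm.1
      have h2 : m ≤ r := hm.2
      exact ⟨r - m, show r - m < r from by omega, rfl⟩
  have hset2 : (fun i => eOn (Finset.univ.image Sum.inl) (i + 1) - Evar r (i + 1)) '' {i | i < r}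
      = (fun m => eOn (Xall r) m - Evar r m) '' {m | 1 ≤ m ∧ m ≤ r} := by
    ext x
    constructor
    · rintro ⟨i, hi, rfl⟩
      have hi' : i < r := hi
      exact ⟨i + 1, ⟨show 1 ≤ i + 1 from by omega, show i + 1 ≤ r from by omega⟩, by rw [Xall]⟩
    · rintro ⟨m, hm, rfl⟩
      have h1 : 1 ≤ m := hm.1
      have h2 : m ≤ r := hm.2
      refine ⟨m - 1, show m - 1 < r from by omega, ?_⟩
      show eOn (Finset.univ.image Sum.inl) (m - 1 + 1) - Evar r (m - 1 + 1)
        = eOn (Xall r) m - Evar r m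
      rw [Xall, show m - 1 + 1 = m from by omega]
  rw [hset1, hset2]
  rw [span_triangular r (Fn r) (fun m => QE r (r - m))
    (fun m k => eOn (Ajset r (r - m)) (m - k)) (fun m h1 h2 => QE_expand r h1 h2)]
  rw [← span_neg_image (fun m => eOn (Xall r) m - Evar r m) {m | 1 ≤ m ∧ m ≤ r}]
  rw [span_triangular r (Fn r) (fun m => -(eOn (Xall r) m - Evar r m))
    (fun m k => eOn (Xall r) (m - k)) (fun m h1 h2 => D_expand r h1 h2)]
end

section
/- The polynomial ring ℤ[x_1,...,x_r] is a free module over the ring of symmetric polynomials ℤ[x_1,...,x_r]^{S_r} of rank r!, with graded rank (in variables of degree 2) given by the q-factorial (r)! = (r)(r-1)⋯(1) where (m) = 1 + q² + ⋯ + q^{2m-2}. -/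
open MvPolynomial Polynomial

noncomputable section ArtinAux

variable {r : ℕ}

/-- lift a permutation of `Fin r` to `Fin (r+1)` fixing `0`. -/
def liftPerm (π : Equiv.Perm (Fin r)) : Equiv.Perm (Fin (r + 1)) :=
  (_root_.finSuccEquiv r).trans ((Equiv.optionCongr π).trans (_root_.finSuccEquiv r).symm)

lemma liftPerm_zero (π : Equiv.Perm (Fin r)) : liftPerm π 0 = 0 := by
  simp [liftPerm]

lemma liftPerm_succ (π : Equiv.Perm (Fin r)) (i : Fin r) :
    liftPerm π i.succ = (π i).succ := by
  simp [liftPerm]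

lemma phi_rename_succ (g : MvPolynomial (Fin r) ℤ) :
    MvPolynomial.finSuccEquiv ℤ r (rename Fin.succ g) = Polynomial.C g := by
  have : ((MvPolynomial.finSuccEquiv ℤ r).toAlgHom.comp (rename Fin.succ))
      = Polynomial.CAlgHom (R := ℤ) (A := MvPolynomial (Fin r) ℤ) := by
    apply MvPolynomial.algHom_ext
    intro i
    simp [finSuccEquiv_X_succ, Polynomial.CAlgHom]
  exact congrArg (fun F => F g) (congrArg (fun h => h.toFun) this)

lemma phi_rename_lift (π : Equiv.Perm (Fin r)) (f : MvPolynomial (Fin (r + 1)) ℤ) :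
    MvPolynomial.finSuccEquiv ℤ r (rename (liftPerm π) f)
      = Polynomial.mapAlgHom (rename (π : Fin r → Fin r) : MvPolynomial (Fin r) ℤ →ₐ[ℤ] MvPolynomial (Fin r) ℤ)
          (MvPolynomial.finSuccEquiv ℤ r f) := by
  have : ((MvPolynomial.finSuccEquiv ℤ r).toAlgHom.comp (rename (liftPerm π)))
      = (Polynomial.mapAlgHom (rename (π : Fin r → Fin r))).comp
          (MvPolynomial.finSuccEquiv ℤ r).toAlgHom := by
    apply MvPolynomial.algHom_ext
    intro i
    refine Fin.cases ?_ ?_ i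
    · simp [liftPerm_zero, finSuccEquiv_X_zero]
    · intro j
      simp [liftPerm_succ, finSuccEquiv_X_succ]
  exact congrArg (fun F => F f) (congrArg (fun h => h.toFun) this)

lemma coeff_phi_symm {s : MvPolynomial (Fin (r + 1)) ℤ} (hs : s.IsSymmetric) (k : ℕ) :
    ((MvPolynomial.finSuccEquiv ℤ r s).coeff k).IsSymmetric := by
  intro π
  have h1 : MvPolynomial.finSuccEquiv ℤ r s
      = Polynomial.mapAlgHom (rename (π : Fin r → Fin r) : MvPolynomial (Fin r) ℤ →ₐ[ℤ] MvPolynomial (Fin r) ℤ)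
          (MvPolynomial.finSuccEquiv ℤ r s) := by
    conv_lhs => rw [← hs (liftPerm π), phi_rename_lift]
  have := congrArg (fun q => q.coeff k) h1
  simp only [Polynomial.coe_mapAlgHom, Polynomial.coeff_map] at this
  exact this.symm

lemma _root_.Multiset.esymm_cons' {R : Type*} [CommSemiring R] (a : R) (s : Multiset R) (k : ℕ) :
    (a ::ₘ s).esymm (k + 1) = s.esymm (k + 1) + a * s.esymm k := by
  rw [Multiset.esymm, Multiset.powersetCard_cons, Multiset.map_add, Multiset.sum_add]
  congr 1
  rw [Multiset.map_map, Multiset.esymm, ← Multiset.sum_map_mul_left]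
  refine congrArg _ (Multiset.map_congr rfl fun t ht => ?_)
  simp [Multiset.prod_cons]

lemma esymm_succ_rec (k : ℕ) :
    esymm (Fin (r + 1)) ℤ (k + 1)
      = rename Fin.succ (esymm (Fin r) ℤ (k + 1))
        + X 0 * rename Fin.succ (esymm (Fin r) ℤ k) := by
  have hren : ∀ n : ℕ, rename (Fin.succ : Fin r → Fin (r+1)) (esymm (Fin r) ℤ n)
      = ((Finset.univ.val.map (fun i : Fin r => (X i.succ : MvPolynomial (Fin (r+1)) ℤ))).esymm n) := by
    intro n
    have : rename (Fin.succ : Fin r → Fin (r+1)) (esymm (Fin r) ℤ n)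
        = aeval (fun i : Fin r => (X i.succ : MvPolynomial (Fin (r+1)) ℤ)) (esymm (Fin r) ℤ n) := by rw [rename_eq_aeval]; rfl
    rw [this, aeval_esymm_eq_multiset_esymm]
  have huniv : (Finset.univ.val.map (X : Fin (r+1) → MvPolynomial (Fin (r+1)) ℤ))
      = (X 0 : MvPolynomial (Fin (r+1)) ℤ)
          ::ₘ (Finset.univ.val.map (fun i : Fin r => (X i.succ : MvPolynomial (Fin (r+1)) ℤ))) := by
    rw [Fin.univ_succ, Finset.cons_val, Multiset.map_cons, Finset.map_val, Multiset.map_map]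
    rfl
  rw [esymm_eq_multiset_esymm, huniv, Multiset.esymm_cons', hren, hren]

/-- the monic polynomial `∏ (t - x_i)` -/
def Pprod (r : ℕ) : Polynomial (MvPolynomial (Fin (r + 1)) ℤ) :=
  ∏ i : Fin (r + 1), (Polynomial.X - Polynomial.C (X i))

lemma Pprod_eval_zero : (Pprod r).eval (X (0 : Fin (r + 1))) = 0 := by
  rw [Pprod, Polynomial.eval_prod]
  refine Finset.prod_eq_zero (Finset.mem_univ 0) ?_
  simp

lemma Pprod_coeff_symm (k : ℕ) : ((Pprod r).coeff k).IsSymmetric := by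
  intro π
  have h1 : Polynomial.mapAlgHom (rename (π : Fin (r+1) → Fin (r+1)) :
        MvPolynomial (Fin (r+1)) ℤ →ₐ[ℤ] MvPolynomial (Fin (r+1)) ℤ) (Pprod r) = Pprod r := by
    rw [Pprod, map_prod]
    rw [← Equiv.prod_comp π (fun i => Polynomial.X - Polynomial.C (X i))]
    refine Finset.prod_congr rfl fun i _ => ?_
    simp [Polynomial.mapAlgHom]
  have := congrArg (fun q => q.coeff k) h1
  simpa only [Polynomial.coe_mapAlgHom, Polynomial.coeff_map, AlgHom.coe_toRingHom] using this

lemma Pprod_monic : (Pprod r).Monic :=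
  Polynomial.monic_prod_of_monic _ _ fun i _ => Polynomial.monic_X_sub_C _

lemma Pprod_natDegree : (Pprod r).natDegree = r + 1 := by
  rw [Pprod, Polynomial.natDegree_prod]
  · simp
  · intro i _
    exact (Polynomial.monic_X_sub_C _).ne_zero

/-- span of the powers `X 0 ^ j`, `j ≤ r`, over the symmetric subalgebra -/
def Mspan (r : ℕ) : Submodule (symmetricSubalgebra (Fin (r + 1)) ℤ) (MvPolynomial (Fin (r + 1)) ℤ) :=
  Submodule.span _ (Set.range fun j : Fin (r + 1) => (X 0 : MvPolynomial (Fin (r + 1)) ℤ) ^ (j : ℕ))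

lemma smul_def' (c : symmetricSubalgebra (Fin (r + 1)) ℤ) (x : MvPolynomial (Fin (r + 1)) ℤ) :
    c • x = (c : MvPolynomial (Fin (r + 1)) ℤ) * x := rfl

lemma smul_def'' (c : symmetricSubalgebra (Fin r) ℤ) (x : MvPolynomial (Fin r) ℤ) :
    c • x = (c : MvPolynomial (Fin r) ℤ) * x := rfl

lemma pow_le_mem_Mspan {k : ℕ} (hk : k ≤ r) : (X 0 : MvPolynomial (Fin (r + 1)) ℤ) ^ k ∈ Mspan r :=
  Submodule.subset_span ⟨⟨k, Nat.lt_succ_of_le hk⟩, rfl⟩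

lemma pow_succ_mem_Mspan : (X 0 : MvPolynomial (Fin (r + 1)) ℤ) ^ (r + 1) ∈ Mspan r := by
  have h0 := Pprod_eval_zero (r := r)
  rw [Polynomial.eval_eq_sum_range, Pprod_natDegree] at h0
  rw [Finset.sum_range_succ] at h0
  have hlead : (Pprod r).coeff (r + 1) = 1 := by
    have := (Pprod_monic (r := r)).leadingCoeff
    rwa [Polynomial.leadingCoeff, Pprod_natDegree] at this
  rw [hlead, one_mul] at h0
  have : (X 0 : MvPolynomial (Fin (r + 1)) ℤ) ^ (r + 1)
      = -∑ i ∈ Finset.range (r + 1), (Pprod r).coeff i * (X 0) ^ i := by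
    linear_combination h0
  rw [this]
  refine neg_mem (Submodule.sum_mem _ fun i hi => ?_)
  have := Finset.mem_range.mp hi
  have h2 : (Pprod r).coeff i * (X 0 : MvPolynomial (Fin (r + 1)) ℤ) ^ i
      = (⟨(Pprod r).coeff i, Pprod_coeff_symm i⟩ : symmetricSubalgebra (Fin (r+1)) ℤ) • (X 0) ^ i := rfl
  rw [h2]
  exact Submodule.smul_mem _ _ (pow_le_mem_Mspan (Nat.lt_succ_iff.mp this))

lemma mulX0_mem_Mspan {x : MvPolynomial (Fin (r + 1)) ℤ} (hx : x ∈ Mspan r) :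
    X 0 * x ∈ Mspan r := by
  induction hx using Submodule.span_induction with
  | mem y hy =>
    obtain ⟨j, rfl⟩ := hy
    rcases Nat.lt_or_ge (j : ℕ) r with h | h
    · rw [← pow_succ']
      exact pow_le_mem_Mspan h
    · have hj : (j : ℕ) = r := le_antisymm (Nat.lt_succ_iff.mp j.isLt) h
      rw [← pow_succ', hj]
      exact pow_succ_mem_Mspan
  | zero => simpa using Submodule.zero_mem _
  | add y z _ _ hy hz => rw [mul_add]; exact Submodule.add_mem _ hy hz
  | smul c y _ hy =>
    rw [smul_def', mul_left_comm, ← smul_def']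
    exact Submodule.smul_mem _ _ hy

lemma pow_mem_Mspan (k : ℕ) : (X 0 : MvPolynomial (Fin (r + 1)) ℤ) ^ k ∈ Mspan r := by
  induction k with
  | zero => exact pow_le_mem_Mspan (Nat.zero_le r)
  | succ k ih => rw [pow_succ']; exact mulX0_mem_Mspan ih

lemma Mspan_mul_mem {x y : MvPolynomial (Fin (r + 1)) ℤ} (hx : x ∈ Mspan r) (hy : y ∈ Mspan r) :
    x * y ∈ Mspan r := by
  induction hx using Submodule.span_induction with
  | mem x' hx' =>
    obtain ⟨j, rfl⟩ := hx'
    induction hy using Submodule.span_induction with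
    | mem y' hy' =>
      obtain ⟨i, rfl⟩ := hy'
      rw [← pow_add]
      exact pow_mem_Mspan _
    | zero => simpa using Submodule.zero_mem _
    | add y z _ _ hy hz => rw [mul_add]; exact Submodule.add_mem _ hy hz
    | smul c y _ hy =>
      rw [smul_def', mul_left_comm, ← smul_def']
      exact Submodule.smul_mem _ _ hy
  | zero => simpa using Submodule.zero_mem _
  | add y z _ _ h1 h2 => rw [add_mul]; exact Submodule.add_mem _ h1 h2
  | smul c y _ h1 =>
    rw [smul_def', mul_assoc, ← smul_def']
    exact Submodule.smul_mem _ _ h1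

lemma rename_symm_mem_Mspan {u : MvPolynomial (Fin r) ℤ} (hu : u.IsSymmetric) :
    rename Fin.succ u ∈ Mspan r := by
  have one_mem : (1 : MvPolynomial (Fin (r + 1)) ℤ) ∈ Mspan r := by
    simpa using pow_le_mem_Mspan (r := r) (Nat.zero_le r)
  have e_mem : ∀ n : ℕ, rename (Fin.succ : Fin r → Fin (r+1)) (esymm (Fin r) ℤ n) ∈ Mspan r := by
    intro n
    induction n with
    | zero => rw [esymm_zero, map_one]; exact one_mem
    | succ k ih =>
      have hrec := esymm_succ_rec (r := r) k
      have : rename (Fin.succ : Fin r → Fin (r+1)) (esymm (Fin r) ℤ (k+1))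
          = esymm (Fin (r+1)) ℤ (k+1) - X 0 * rename Fin.succ (esymm (Fin r) ℤ k) := by
        linear_combination -hrec
      rw [this]
      refine Submodule.sub_mem _ ?_ (mulX0_mem_Mspan ih)
      have h2 : esymm (Fin (r+1)) ℤ (k+1)
          = (⟨esymm (Fin (r+1)) ℤ (k+1), esymm_isSymmetric _ _ _⟩ :
              symmetricSubalgebra (Fin (r+1)) ℤ) • (1 : MvPolynomial (Fin (r+1)) ℤ) := by
        rw [smul_def', mul_one]
      rw [h2]
      exact Submodule.smul_mem _ _ one_mem
  have aeval_mem : ∀ q : MvPolynomial (Fin r) ℤ,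
      aeval (fun i : Fin r =>
        rename (Fin.succ : Fin r → Fin (r+1)) (esymm (Fin r) ℤ ((i : ℕ) + 1))) q ∈ Mspan r := by
    intro q
    induction q using MvPolynomial.induction_on with
    | C a =>
      rw [MvPolynomial.aeval_C, Algebra.algebraMap_eq_smul_one]
      exact zsmul_mem one_mem a
    | add p q hp1 hq1 => rw [map_add]; exact Submodule.add_mem _ hp1 hq1
    | mul_X p i hp1 =>
      rw [map_mul, MvPolynomial.aeval_X]
      exact Mspan_mul_mem hp1 (e_mem _)
  obtain ⟨p, hp⟩ := esymmAlgHom_fin_surjective (R := ℤ) (le_refl r) ⟨u, hu⟩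
  have hu' : u = aeval (fun i : Fin r => esymm (Fin r) ℤ ((i : ℕ) + 1)) p := by
    have h3 := congrArg Subtype.val hp
    rw [esymmAlgHom_apply] at h3
    exact h3.symm
  have hru : rename (Fin.succ : Fin r → Fin (r+1)) u
      = aeval (fun i : Fin r =>
          rename (Fin.succ : Fin r → Fin (r+1)) (esymm (Fin r) ℤ ((i : ℕ) + 1))) p := by
    rw [hu', ← AlgHom.comp_apply, comp_aeval]
  rw [hru]
  exact aeval_mem p

lemma symm_coeffs_zero {c : Fin (r + 1) → MvPolynomial (Fin (r + 1)) ℤ}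
    (hc : ∀ j, (c j).IsSymmetric)
    (h : ∑ j : Fin (r + 1), c j * X 0 ^ (j : ℕ) = 0) : ∀ j, c j = 0 := by
  set Q : Polynomial (MvPolynomial (Fin (r + 1)) ℤ) :=
    ∑ j : Fin (r + 1), Polynomial.C (c j) * Polynomial.X ^ (j : ℕ) with hQ
  have heval : ∀ i : Fin (r + 1), Q.eval (X i) = 0 := by
    intro i
    have h2 := congrArg (rename (⇑(Equiv.swap (0 : Fin (r + 1)) i))) h
    rw [map_sum, map_zero] at h2
    simp_rw [map_mul, map_pow, rename_X] at h2
    have h3 : ∀ j : Fin (r + 1), rename (⇑(Equiv.swap (0 : Fin (r + 1)) i)) (c j) = c j :=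
      fun j => hc j _
    simp_rw [h3, Equiv.swap_apply_left] at h2
    rw [hQ, Polynomial.eval_finset_sum]
    simpa using h2
  have hdeg : Q.natDegree ≤ r := by
    refine (Polynomial.natDegree_sum_le _ _).trans ?_
    rw [Finset.fold_max_le]
    refine ⟨Nat.zero_le r, fun j _ => ?_⟩
    exact (Polynomial.natDegree_C_mul_X_pow_le _ _).trans (Nat.lt_succ_iff.mp j.isLt)
  have hQ0 : Q = 0 := by
    refine Polynomial.eq_zero_of_natDegree_lt_card_of_eval_eq_zero Q
      (MvPolynomial.X_injective) heval ?_
    simpa using Nat.lt_succ_of_le hdeg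
  intro j
  have h4 := congrArg (fun q => q.coeff (j : ℕ)) hQ0
  rw [hQ] at h4
  simp only [Polynomial.finset_sum_coeff, Polynomial.coeff_C_mul, Polynomial.coeff_X_pow,
    Polynomial.coeff_zero, mul_ite, mul_one, mul_zero] at h4
  rw [Finset.sum_eq_single j
    (fun x _ hxj => by rw [if_neg (fun hh => hxj (Fin.ext hh.symm))])
    (by simp)] at h4
  simpa using h4

variable {m : ℕ}

/-- the candidate basis family -/
def vfam (b : Fin m → MvPolynomial (Fin r) ℤ) (p : Fin (r + 1) × Fin m) :
    MvPolynomial (Fin (r + 1)) ℤ :=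
  X 0 ^ (p.1 : ℕ) * rename Fin.succ (b p.2)

lemma phi_symm_X : (MvPolynomial.finSuccEquiv ℤ r).symm Polynomial.X = X 0 := by
  rw [← finSuccEquiv_X_zero (R := ℤ) (n := r)]
  exact AlgEquiv.symm_apply_apply _ _

lemma phi_symm_C (gp : MvPolynomial (Fin r) ℤ) :
    (MvPolynomial.finSuccEquiv ℤ r).symm (Polynomial.C gp) = rename Fin.succ gp := by
  rw [← phi_rename_succ gp]
  exact AlgEquiv.symm_apply_apply _ _

lemma vfam_li (b : Module.Basis (Fin m) (symmetricSubalgebra (Fin r) ℤ) (MvPolynomial (Fin r) ℤ)) :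
    LinearIndependent (symmetricSubalgebra (Fin (r + 1)) ℤ) (vfam (fun a => b a)) := by
  rw [Fintype.linearIndependent_iff]
  intro g hg
  set φg : Fin (r + 1) × Fin m → Polynomial (MvPolynomial (Fin r) ℤ) :=
    fun p => MvPolynomial.finSuccEquiv ℤ r ((g p : MvPolynomial (Fin (r + 1)) ℤ))
      * Polynomial.X ^ (p.1 : ℕ) with hφg
  have hsym : ∀ p k, ((φg p).coeff k).IsSymmetric := by
    intro p k
    rw [hφg]
    simp only [Polynomial.coeff_mul_X_pow']
    split
    · exact coeff_phi_symm (g p).2 _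
    · exact MvPolynomial.IsSymmetric.zero
  have h1 := congrArg (MvPolynomial.finSuccEquiv ℤ r) hg
  rw [map_sum, map_zero] at h1
  have h2 : ∀ p : Fin (r + 1) × Fin m,
      (MvPolynomial.finSuccEquiv ℤ r) (g p • vfam (fun a => b a) p)
        = φg p * Polynomial.C (b p.2) := by
    intro p
    rw [smul_def', vfam, hφg, map_mul, map_mul, map_pow, finSuccEquiv_X_zero, phi_rename_succ]
    ring
  simp_rw [h2] at h1
  have h3 : ∀ k : ℕ, ∑ a' : Fin m,
      (⟨∑ j : Fin (r + 1), (φg (j, a')).coeff k,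
        (symmetricSubalgebra (Fin r) ℤ).sum_mem (fun j _ => hsym (j, a') k)⟩ :
        symmetricSubalgebra (Fin r) ℤ) • b a' = 0 := by
    intro k
    have h4 := congrArg (fun q => q.coeff k) h1
    simp only [Polynomial.finset_sum_coeff, Polynomial.coeff_mul_C, Polynomial.coeff_zero] at h4
    rw [Fintype.sum_prod_type_right] at h4
    rw [← h4]
    refine Finset.sum_congr rfl fun a' _ => ?_
    rw [smul_def'']
    rw [Finset.sum_mul]
  have h5 : ∀ a' k, ∑ j : Fin (r + 1), (φg (j, a')).coeff k = 0 := by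
    intro a' k
    have := Fintype.linearIndependent_iff.mp b.linearIndependent _ (h3 k) a'
    exact congrArg Subtype.val this
  have key : ∀ a : Fin m,
      ∑ j : Fin (r + 1), ((g (j, a) : MvPolynomial (Fin (r + 1)) ℤ)) * X 0 ^ (j : ℕ) = 0 := by
    intro a
    have hQ0 : ∑ j : Fin (r + 1), φg (j, a) = 0 := by
      refine Polynomial.ext fun k => ?_
      rw [Polynomial.finset_sum_coeff]
      simpa using h5 a k
    have h6 := congrArg (MvPolynomial.finSuccEquiv ℤ r).symm hQ0
    rw [map_sum, map_zero] at h6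
    rw [← h6]
    refine Finset.sum_congr rfl fun j _ => ?_
    rw [hφg, map_mul, map_pow, phi_symm_X]
    congr 1
    exact (AlgEquiv.symm_apply_apply _ _).symm
  intro p
  obtain ⟨j, a⟩ := p
  exact Subtype.ext (symm_coeffs_zero (fun j' => (g (j', a)).2) (key a) j)

lemma mem_span_mul_rename {w : MvPolynomial (Fin (r + 1)) ℤ} (hw : w ∈ Mspan r)
    (b : Fin m → MvPolynomial (Fin r) ℤ) (a : Fin m) :
    w * rename Fin.succ (b a)
      ∈ Submodule.span (symmetricSubalgebra (Fin (r + 1)) ℤ) (Set.range (vfam b)) := by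
  induction hw using Submodule.span_induction with
  | mem x hx => obtain ⟨j, rfl⟩ := hx; exact Submodule.subset_span ⟨(j, a), rfl⟩
  | zero => simpa using Submodule.zero_mem _
  | add x y _ _ hx hy => rw [add_mul]; exact Submodule.add_mem _ hx hy
  | smul c x _ hx => rw [smul_def', mul_assoc, ← smul_def']; exact Submodule.smul_mem _ _ hx

lemma vfam_span (b : Module.Basis (Fin m) (symmetricSubalgebra (Fin r) ℤ) (MvPolynomial (Fin r) ℤ)) :
    ⊤ ≤ Submodule.span (symmetricSubalgebra (Fin (r + 1)) ℤ)
      (Set.range (vfam (fun a => b a))) := by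
  intro f _
  have hf : f = ∑ k ∈ Finset.range ((MvPolynomial.finSuccEquiv ℤ r f).natDegree + 1),
      rename Fin.succ ((MvPolynomial.finSuccEquiv ℤ r f).coeff k) * X 0 ^ k := by
    have h1 : MvPolynomial.finSuccEquiv ℤ r f
        = ∑ k ∈ Finset.range ((MvPolynomial.finSuccEquiv ℤ r f).natDegree + 1),
            Polynomial.C ((MvPolynomial.finSuccEquiv ℤ r f).coeff k) * Polynomial.X ^ k :=
      (MvPolynomial.finSuccEquiv ℤ r f).as_sum_range_C_mul_X_pow
    have h2 := congrArg (MvPolynomial.finSuccEquiv ℤ r).symm h1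
    rw [AlgEquiv.symm_apply_apply, map_sum] at h2
    conv_lhs => rw [h2]
    refine Finset.sum_congr rfl fun k _ => ?_
    rw [map_mul, map_pow, phi_symm_X, phi_symm_C]
  rw [hf]
  refine Submodule.sum_mem _ fun k _ => ?_
  set gk := (MvPolynomial.finSuccEquiv ℤ r f).coeff k with hgk
  have h3 : rename (Fin.succ : Fin r → Fin (r + 1)) gk * X 0 ^ k
      = ∑ a : Fin m, (rename Fin.succ ((b.repr gk a : MvPolynomial (Fin r) ℤ)) * X 0 ^ k)
          * rename Fin.succ (b a) := by
    conv_lhs => rw [← b.sum_repr gk]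
    rw [map_sum, Finset.sum_mul]
    refine Finset.sum_congr rfl fun a _ => ?_
    rw [smul_def'', map_mul]
    ring
  rw [h3]
  refine Submodule.sum_mem _ fun a _ => ?_
  exact mem_span_mul_rename
    (Mspan_mul_mem (rename_symm_mem_Mspan (b.repr gk a).2) (pow_mem_Mspan k)) _ a

end ArtinAux

/-- `ℤ[x_1,…,x_r]` is free over the symmetric polynomials `ℤ[x_1,…,x_r]^{S_r}` of rank `r!`;
with the variables placed in degree `2`, a homogeneous basis has graded rank the `q`-factorial
`(r)! = (r)(r-1)⋯(1)` where `(m) = 1 + q² + ⋯ + q^{2m-2}`. -/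
theorem mvPolynomial_free_over_symmetric_qFactorial (r : ℕ) :
    ∃ (b : Module.Basis (Fin (Nat.factorial r)) (symmetricSubalgebra (Fin r) ℤ)
        (MvPolynomial (Fin r) ℤ)) (d : Fin (Nat.factorial r) → ℕ),
      (∀ i, MvPolynomial.IsHomogeneous (b i) (d i)) ∧
      (∑ i, (Polynomial.X : Polynomial ℤ) ^ (2 * d i))
        = ∏ m ∈ Finset.range r, ∑ j ∈ Finset.range (m + 1), Polynomial.X ^ (2 * j) := by
  induction r with
  | zero =>
    have h00 : Nat.factorial 0 = 1 := rfl
    have hone : ∀ j : Fin (Nat.factorial 0), j = ⟨0, by simp [Nat.factorial]⟩ := by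
      intro j
      have h01 : (j : ℕ) < 1 := j.isLt
      exact Fin.ext (by omega)
    have hli : LinearIndependent (symmetricSubalgebra (Fin 0) ℤ)
        (fun _ : Fin (Nat.factorial 0) => (1 : MvPolynomial (Fin 0) ℤ)) := by
      rw [Fintype.linearIndependent_iff]
      intro g hg i
      have h1 : g i • (1 : MvPolynomial (Fin 0) ℤ) = 0 := by
        rw [← hg, Finset.sum_eq_single_of_mem i (Finset.mem_univ i)
          (fun j _ hji => absurd ((hone j).trans (hone i).symm) hji)]
      have h2 : (g i : MvPolynomial (Fin 0) ℤ) = 0 := by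
        have : (g i : MvPolynomial (Fin 0) ℤ) * 1 = 0 := h1
        rwa [mul_one] at this
      exact Subtype.ext h2
    have hsym0 : ∀ f : MvPolynomial (Fin 0) ℤ, f.IsSymmetric := by
      intro f e
      have he : e = Equiv.refl (Fin 0) := by
        ext x
        exact x.elim0
      rw [he]
      have : ⇑(Equiv.refl (Fin 0)) = id := rfl
      rw [this, rename_id, AlgHom.id_apply]
    have hsp : ⊤ ≤ Submodule.span (symmetricSubalgebra (Fin 0) ℤ)
        (Set.range (fun _ : Fin (Nat.factorial 0) => (1 : MvPolynomial (Fin 0) ℤ))) := by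
      intro f _
      have : f = (⟨f, hsym0 f⟩ : symmetricSubalgebra (Fin 0) ℤ) • (1 : MvPolynomial (Fin 0) ℤ) := by
        change f = f * 1
        rw [mul_one]
      rw [this]
      exact Submodule.smul_mem _ _
        (Submodule.subset_span ⟨⟨0, by simp [Nat.factorial]⟩, rfl⟩)
    refine ⟨Module.Basis.mk hli hsp, fun _ => 0, ?_, ?_⟩
    · intro i
      rw [Module.Basis.coe_mk]
      exact isHomogeneous_one _ _
    · rw [Finset.prod_range_zero]
      rw [Finset.sum_congr rfl (fun i _ => by rw [mul_zero, pow_zero])]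
      rw [Finset.sum_const, Finset.card_univ]
      simp [Nat.factorial]
      exact Fintype.card_eq_one_iff.mpr ⟨⟨0, by simp [Nat.factorial]⟩, hone⟩
  | succ r ih =>
    obtain ⟨b, d, hhom, hq⟩ := ih
    let e : Fin (r + 1) × Fin (Nat.factorial r) ≃ Fin (Nat.factorial (r + 1)) :=
      finProdFinEquiv.trans (finCongr (Nat.factorial_succ r).symm)
    refine ⟨(Module.Basis.mk (vfam_li b) (vfam_span b)).reindex e,
      fun i => ((e.symm i).1 : ℕ) + d (e.symm i).2, ?_, ?_⟩
    · intro i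
      rw [Module.Basis.reindex_apply, Module.Basis.coe_mk]
      have h1 : MvPolynomial.IsHomogeneous (vfam (fun a => b a) (e.symm i))
          (1 * ((e.symm i).1 : ℕ) + d (e.symm i).2) :=
        ((isHomogeneous_X ℤ 0).pow _).mul ((hhom _).rename_isHomogeneous)
      rwa [one_mul] at h1
    · calc ∑ i : Fin (Nat.factorial (r + 1)),
            (Polynomial.X : Polynomial ℤ) ^ (2 * (((e.symm i).1 : ℕ) + d (e.symm i).2))
          = ∑ p : Fin (r + 1) × Fin (Nat.factorial r),
            (Polynomial.X : Polynomial ℤ) ^ (2 * ((p.1 : ℕ) + d p.2)) :=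
            Equiv.sum_comp e.symm
              (fun p : Fin (r + 1) × Fin (Nat.factorial r) =>
                (Polynomial.X : Polynomial ℤ) ^ (2 * ((p.1 : ℕ) + d p.2)))
      _ = (∑ j : Fin (r + 1), (Polynomial.X : Polynomial ℤ) ^ (2 * (j : ℕ)))
            * (∑ a : Fin (Nat.factorial r), (Polynomial.X : Polynomial ℤ) ^ (2 * d a)) := by
            rw [Finset.sum_mul_sum, Fintype.sum_prod_type]
            refine Finset.sum_congr rfl fun j _ => Finset.sum_congr rfl fun a _ => ?_
            rw [mul_add, pow_add]
      _ = ∏ m ∈ Finset.range (r + 1), ∑ j ∈ Finset.range (m + 1), Polynomial.X ^ (2 * j) := by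
            rw [hq, Finset.prod_range_succ, mul_comm]
            congr 1
            exact Fin.sum_univ_eq_sum_range (fun j => (Polynomial.X : Polynomial ℤ) ^ (2 * j)) (r + 1)
end
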